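/- Let L₁ and L₂ be bounded square complex matrices, C = exp((L₁+L₂)/n), D = exp(L₁/n)·exp(L₂/n). Then ‖Cⁿ − Dⁿ‖ ≤ 2·exp(2‖L₁‖ + 2‖L₂‖)/n. Consequently, (exp(L₁/n)·exp(L₂/n))ⁿ → exp(L₁ + L₂) as n → ∞ (the Lie–Trotter product formula). -/

import Mathlib

open NormedSpace Filter
open scoped Nat

section LieTrotterAux

variable {A : Type*} [NormedRing A] [NormedAlgebra ℂ A] [CompleteSpace A]

private lemma lt_norm_pow_mul_le (u v : A) : ∀ k : ℕ, ‖u ^ k * v‖ ≤ ‖u‖ ^ k * ‖v‖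
  | 0 => by simp
  | (k + 1) => by
    calc ‖u ^ (k + 1) * v‖ = ‖u * (u ^ k * v)‖ := by rw [pow_succ', mul_assoc]
      _ ≤ ‖u‖ * ‖u ^ k * v‖ := norm_mul_le _ _
      _ ≤ ‖u‖ * (‖u‖ ^ k * ‖v‖) := by
          have := lt_norm_pow_mul_le u v k
          have h0 : (0:ℝ) ≤ ‖u‖ := norm_nonneg _
          nlinarith [norm_nonneg (u ^ k * v)]
      _ = ‖u‖ ^ (k + 1) * ‖v‖ := by rw [pow_succ']; ring

private lemma lt_norm_mul_pow_le (u v : A) : ∀ k : ℕ, ‖v * u ^ k‖ ≤ ‖v‖ * ‖u‖ ^ k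
  | 0 => by simp
  | (k + 1) => by
    calc ‖v * u ^ (k + 1)‖ = ‖(v * u ^ k) * u‖ := by rw [pow_succ, mul_assoc]
      _ ≤ ‖v * u ^ k‖ * ‖u‖ := norm_mul_le _ _
      _ ≤ (‖v‖ * ‖u‖ ^ k) * ‖u‖ := by
          have := lt_norm_mul_pow_le u v k
          nlinarith [norm_nonneg (v * u ^ k), norm_nonneg u]
      _ = ‖v‖ * ‖u‖ ^ (k + 1) := by rw [pow_succ]; ring

private lemma lt_norm_tsum_le {f : ℕ → A} {g : ℕ → ℝ} (hg : Summable g)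
    (h : ∀ k, ‖f k‖ ≤ g k) : ‖∑' k, f k‖ ≤ ∑' k, g k := by
  have hf : Summable fun k => ‖f k‖ :=
    Summable.of_nonneg_of_le (fun k => norm_nonneg _) h hg
  exact (norm_tsum_le_tsum_norm hf).trans (Summable.tsum_le_tsum h hf hg)

private lemma lt_real_exp_tsum (x : ℝ) : Real.exp x = ∑' k : ℕ, x ^ k / k ! := by
  rw [Real.exp_eq_exp_ℝ, exp_eq_tsum_div]

private lemma lt_norm_coeff (k : ℕ) : ‖((k ! : ℂ))⁻¹‖ = ((k ! : ℝ))⁻¹ := by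
  rw [norm_inv]
  norm_cast

/-- `‖exp u * v‖ ≤ e^{‖u‖} ‖v‖` (no `NormOneClass` needed). -/
private lemma lt_norm_exp_mul_le (u v : A) : ‖exp u * v‖ ≤ Real.exp ‖u‖ * ‖v‖ := by
  have hsum : Summable fun k : ℕ => (k !⁻¹ : ℂ) • u ^ k := expSeries_summable' u
  have h1 : exp u * v = ∑' k : ℕ, ((k !⁻¹ : ℂ) • u ^ k) * v := by
    rw [exp_eq_tsum ℂ]
    exact (hsum.tsum_mul_right v).symm
  have hg : Summable fun k : ℕ => ‖u‖ ^ k / k ! * ‖v‖ :=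
    (Real.summable_pow_div_factorial ‖u‖).mul_right _
  rw [h1]
  refine (lt_norm_tsum_le hg fun k => ?_).trans_eq ?_
  · rw [smul_mul_assoc, norm_smul, lt_norm_coeff]
    have h2 := lt_norm_pow_mul_le u v k
    have h3 : (0:ℝ) ≤ ((k ! : ℝ))⁻¹ := by positivity
    calc ((k ! : ℝ))⁻¹ * ‖u ^ k * v‖ ≤ ((k ! : ℝ))⁻¹ * (‖u‖ ^ k * ‖v‖) := by
          exact mul_le_mul_of_nonneg_left h2 h3
      _ = ‖u‖ ^ k / k ! * ‖v‖ := by ring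
  · rw [tsum_mul_right, ← lt_real_exp_tsum]

/-- `‖v * exp u‖ ≤ ‖v‖ e^{‖u‖}`. -/
private lemma lt_norm_mul_exp_le (u v : A) : ‖v * exp u‖ ≤ ‖v‖ * Real.exp ‖u‖ := by
  have hsum : Summable fun k : ℕ => (k !⁻¹ : ℂ) • u ^ k := expSeries_summable' u
  have h1 : v * exp u = ∑' k : ℕ, v * ((k !⁻¹ : ℂ) • u ^ k) := by
    rw [exp_eq_tsum ℂ]
    exact (hsum.tsum_mul_left v).symm
  have hg : Summable fun k : ℕ => ‖v‖ * (‖u‖ ^ k / k !) :=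
    (Real.summable_pow_div_factorial ‖u‖).mul_left _
  rw [h1]
  refine (lt_norm_tsum_le hg fun k => ?_).trans_eq ?_
  · rw [mul_smul_comm, norm_smul, lt_norm_coeff]
    have h2 := lt_norm_mul_pow_le u v k
    have h3 : (0:ℝ) ≤ ((k ! : ℝ))⁻¹ := by positivity
    calc ((k ! : ℝ))⁻¹ * ‖v * u ^ k‖ ≤ ((k ! : ℝ))⁻¹ * (‖v‖ * ‖u‖ ^ k) := by
          exact mul_le_mul_of_nonneg_left h2 h3
      _ = ‖v‖ * (‖u‖ ^ k / k !) := by ring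
  · rw [tsum_mul_left, ← lt_real_exp_tsum]

/-- `‖exp u - 1‖ ≤ ‖u‖ e^{‖u‖}`. -/
private lemma lt_norm_exp_sub_one_le (u : A) : ‖exp u - 1‖ ≤ ‖u‖ * Real.exp ‖u‖ := by
  have hsum : Summable fun k : ℕ => (k !⁻¹ : ℂ) • u ^ k := expSeries_summable' u
  have h1 : exp u - 1 = ∑' k : ℕ, ((k + 1)!⁻¹ : ℂ) • u ^ (k + 1) := by
    simp only [exp_eq_tsum ℂ]
    have h2 := Summable.tsum_eq_zero_add hsum
    rw [h2]
    simp [Nat.factorial]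
  have hg : Summable fun k : ℕ => ‖u‖ * (‖u‖ ^ k / k !) :=
    (Real.summable_pow_div_factorial ‖u‖).mul_left _
  rw [h1]
  refine (lt_norm_tsum_le hg fun k => ?_).trans_eq ?_
  · rw [norm_smul, lt_norm_coeff]
    have h2 : ‖u ^ (k + 1)‖ ≤ ‖u‖ ^ (k + 1) := norm_pow_le' u (Nat.succ_pos k)
    have hfac : (k ! : ℝ) ≤ ((k + 1)! : ℝ) := by
      exact_mod_cast Nat.factorial_le (Nat.le_succ k)
    have hkpos : (0:ℝ) < (k ! : ℝ) := by positivity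
    have hk1pos : (0:ℝ) < ((k + 1)! : ℝ) := by positivity
    calc (((k + 1)! : ℝ))⁻¹ * ‖u ^ (k + 1)‖ ≤ (((k + 1)! : ℝ))⁻¹ * ‖u‖ ^ (k + 1) := by
          exact mul_le_mul_of_nonneg_left h2 (by positivity)
      _ = ‖u‖ ^ (k + 1) / ((k + 1)! : ℝ) := by ring
      _ ≤ ‖u‖ ^ (k + 1) / (k ! : ℝ) := by
          apply div_le_div_of_nonneg_left (by positivity) hkpos hfac
      _ = ‖u‖ * (‖u‖ ^ k / k !) := by rw [pow_succ]; ring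
  · rw [tsum_mul_left, ← lt_real_exp_tsum]

/-- `‖exp u - 1 - u‖ ≤ (‖u‖²/2) e^{‖u‖}`. -/
private lemma lt_norm_exp_sub_one_sub_le (u : A) :
    ‖exp u - 1 - u‖ ≤ ‖u‖ ^ 2 / 2 * Real.exp ‖u‖ := by
  have hsum : Summable fun k : ℕ => (k !⁻¹ : ℂ) • u ^ k := expSeries_summable' u
  have h1 : exp u - 1 - u = ∑' k : ℕ, ((k + 2)!⁻¹ : ℂ) • u ^ (k + 2) := by
    simp only [exp_eq_tsum ℂ]
    have h2 := (Summable.sum_add_tsum_nat_add 2 hsum).symm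
    rw [h2]
    simp [Finset.sum_range_succ, Nat.factorial]
    abel
  have hg : Summable fun k : ℕ => ‖u‖ ^ 2 / 2 * (‖u‖ ^ k / k !) :=
    (Real.summable_pow_div_factorial ‖u‖).mul_left _
  rw [h1]
  refine (lt_norm_tsum_le hg fun k => ?_).trans_eq ?_
  · rw [norm_smul, lt_norm_coeff]
    have h2 : ‖u ^ (k + 2)‖ ≤ ‖u‖ ^ (k + 2) := norm_pow_le' u (by omega)
    have hfac : (2:ℝ) * (k ! : ℝ) ≤ ((k + 2)! : ℝ) := by
      have : 2 * k ! ≤ (k + 2)! := by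
        have h3 : (k + 2)! = (k + 2) * ((k + 1) * k !) := by
          rw [show k + 2 = (k + 1) + 1 from rfl, Nat.factorial_succ, Nat.factorial_succ]
        rw [h3]
        calc 2 * k ! ≤ (k + 2) * k ! := Nat.mul_le_mul_right _ (by omega)
          _ ≤ (k + 2) * ((k + 1) * k !) :=
              Nat.mul_le_mul_left _ (Nat.le_mul_of_pos_left _ (by omega))
      exact_mod_cast this
    have hkpos : (0:ℝ) < (k ! : ℝ) := by positivity
    calc (((k + 2)! : ℝ))⁻¹ * ‖u ^ (k + 2)‖ ≤ (((k + 2)! : ℝ))⁻¹ * ‖u‖ ^ (k + 2) := by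
          exact mul_le_mul_of_nonneg_left h2 (by positivity)
      _ = ‖u‖ ^ (k + 2) / ((k + 2)! : ℝ) := by ring
      _ ≤ ‖u‖ ^ (k + 2) / (2 * (k ! : ℝ)) := by
          apply div_le_div_of_nonneg_left (by positivity) (by positivity) hfac
      _ = ‖u‖ ^ 2 / 2 * (‖u‖ ^ k / k !) := by
          rw [show k + 2 = k + 2 from rfl, pow_add]
          field_simp
  · rw [tsum_mul_left, ← lt_real_exp_tsum]

/-- Single-step estimate: `‖exp(a+b) - exp a exp b‖ ≤ (‖a‖+‖b‖)² e^{‖a‖+‖b‖}`. -/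
private lemma lt_step (a b : A) :
    ‖exp (a + b) - exp a * exp b‖ ≤
      (‖a‖ + ‖b‖) ^ 2 * Real.exp (‖a‖ + ‖b‖) := by
  set α := ‖a‖ with hα
  set β := ‖b‖ with hβ
  have hα0 : 0 ≤ α := norm_nonneg _
  have hβ0 : 0 ≤ β := norm_nonneg _
  have hid : exp (a + b) - exp a * exp b =
      (exp (a + b) - 1 - (a + b)) -
        ((exp a - 1 - a) * exp b + a * (exp b - 1) + (exp b - 1 - b)) := by
    noncomm_ring
  rw [hid]
  have h1 : ‖exp (a + b) - 1 - (a + b)‖ ≤ (α + β) ^ 2 / 2 * Real.exp (α + β) := by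
    refine (lt_norm_exp_sub_one_sub_le (a + b)).trans ?_
    have hab : ‖a + b‖ ≤ α + β := norm_add_le a b
    gcongr
  have h2 : ‖(exp a - 1 - a) * exp b‖ ≤ (α ^ 2 / 2 * Real.exp α) * Real.exp β := by
    refine (lt_norm_mul_exp_le b _).trans ?_
    gcongr
    exact lt_norm_exp_sub_one_sub_le a
  have h3 : ‖a * (exp b - 1)‖ ≤ α * (β * Real.exp β) := by
    refine (norm_mul_le _ _).trans ?_
    gcongr
    exact lt_norm_exp_sub_one_le b
  have h4 : ‖exp b - 1 - b‖ ≤ β ^ 2 / 2 * Real.exp β := lt_norm_exp_sub_one_sub_le b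
  have hee : Real.exp β ≤ Real.exp (α + β) := Real.exp_le_exp.2 (by linarith)
  have hEpos : 0 < Real.exp (α + β) := Real.exp_pos _
  have hepos : 0 < Real.exp β := Real.exp_pos _
  have hEA : Real.exp α * Real.exp β = Real.exp (α + β) := (Real.exp_add α β).symm
  calc ‖_ - _‖ ≤ ‖exp (a + b) - 1 - (a + b)‖ +
        (‖(exp a - 1 - a) * exp b‖ + ‖a * (exp b - 1)‖ + ‖exp b - 1 - b‖) := by
        refine (norm_sub_le _ _).trans ?_
        gcongr
        exact (norm_add_le _ _).trans (by gcongr; exact norm_add_le _ _)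
    _ ≤ (α + β) ^ 2 / 2 * Real.exp (α + β) +
        ((α ^ 2 / 2 * Real.exp α) * Real.exp β + α * (β * Real.exp β) +
          β ^ 2 / 2 * Real.exp β) := by gcongr
    _ ≤ (α + β) ^ 2 * Real.exp (α + β) := by
        rw [mul_assoc, hEA]
        nlinarith [mul_le_mul_of_nonneg_left hee (mul_nonneg hα0 hβ0),
          mul_le_mul_of_nonneg_left hee (by positivity : (0:ℝ) ≤ β ^ 2 / 2)]

/-- Non-commutative telescoping identity. -/
private lemma lt_pow_sub_pow (C D : A) : ∀ n : ℕ,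
    C ^ n - D ^ n = ∑ i ∈ Finset.range n, C ^ i * (C - D) * D ^ (n - 1 - i)
  | 0 => by simp
  | (n + 1) => by
    have key : C ^ (n + 1) - D ^ (n + 1) = C * (C ^ n - D ^ n) + (C - D) * D ^ n := by
      rw [pow_succ', pow_succ']
      noncomm_ring
    rw [Finset.sum_range_succ']
    have hzero : C ^ 0 * (C - D) * D ^ (n + 1 - 1 - 0) = (C - D) * D ^ n := by simp
    rw [hzero, key, lt_pow_sub_pow C D n, Finset.mul_sum]
    congr 1
    refine Finset.sum_congr rfl fun i _ => ?_
    rw [show n + 1 - 1 - (i + 1) = n - 1 - i from by omega, pow_succ']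
    noncomm_ring

/-- Bound on right multiplication by powers of `exp a * exp b`. -/
private lemma lt_norm_mul_pow_exp (a b : A) (w : A) : ∀ m : ℕ,
    ‖w * (exp a * exp b) ^ m‖ ≤ ‖w‖ * (Real.exp ‖a‖ * Real.exp ‖b‖) ^ m
  | 0 => by simp
  | (m + 1) => by
    have h1 : w * (exp a * exp b) ^ (m + 1) =
        ((w * (exp a * exp b) ^ m) * exp a) * exp b := by
      rw [pow_succ]
      noncomm_ring
    rw [h1]
    have hA : (0:ℝ) < Real.exp ‖a‖ := Real.exp_pos _
    have hB : (0:ℝ) < Real.exp ‖b‖ := Real.exp_pos _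
    calc ‖((w * (exp a * exp b) ^ m) * exp a) * exp b‖
        ≤ ‖(w * (exp a * exp b) ^ m) * exp a‖ * Real.exp ‖b‖ :=
          lt_norm_mul_exp_le b _
      _ ≤ (‖w * (exp a * exp b) ^ m‖ * Real.exp ‖a‖) * Real.exp ‖b‖ := by
          gcongr
          exact lt_norm_mul_exp_le a _
      _ ≤ ((‖w‖ * (Real.exp ‖a‖ * Real.exp ‖b‖) ^ m) * Real.exp ‖a‖) * Real.exp ‖b‖ := by
          gcongr
          exact lt_norm_mul_pow_exp a b w m
      _ = ‖w‖ * (Real.exp ‖a‖ * Real.exp ‖b‖) ^ (m + 1) := by rw [pow_succ]; ring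

/-- Main quantitative estimate in terms of `a`, `b`. -/
private lemma lt_main (a b : A) (n : ℕ) :
    ‖(exp (a + b)) ^ n - (exp a * exp b) ^ n‖ ≤
      n * ((‖a‖ + ‖b‖) ^ 2 * Real.exp (n * (‖a‖ + ‖b‖))) := by
  set C := exp (a + b) with hC
  set D := exp a * exp b with hD
  set t := ‖a‖ + ‖b‖ with ht
  have ht0 : 0 ≤ t := by positivity
  rw [lt_pow_sub_pow C D n]
  refine (norm_sum_le _ _).trans ?_
  have hterm : ∀ i ∈ Finset.range n,
      ‖C ^ i * (C - D) * D ^ (n - 1 - i)‖ ≤ t ^ 2 * Real.exp (n * t) := by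
    intro i hi
    have hin : i < n := Finset.mem_range.1 hi
    set m := n - 1 - i with hm
    have hC' : C ^ i = exp (i • (a + b)) := by
      letI : NormedAlgebra ℚ A := NormedAlgebra.restrictScalars ℚ ℂ A
      exact (exp_nsmul i (a + b)).symm
    have step1 : ‖C ^ i * (C - D) * D ^ m‖ ≤
        Real.exp ‖i • (a + b)‖ * ‖(C - D) * D ^ m‖ := by
      rw [mul_assoc, hC']
      exact lt_norm_exp_mul_le _ _
    have hnsmul : ‖i • (a + b)‖ ≤ i * t := by
      refine (norm_nsmul_le : ‖i • (a + b)‖ ≤ i * ‖a + b‖).trans ?_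
      have : ‖a + b‖ ≤ t := norm_add_le a b
      gcongr
    have step2 : ‖(C - D) * D ^ m‖ ≤
        ‖C - D‖ * (Real.exp ‖a‖ * Real.exp ‖b‖) ^ m :=
      lt_norm_mul_pow_exp a b _ m
    have step3 : ‖C - D‖ ≤ t ^ 2 * Real.exp t := lt_step a b
    have hEpow : (0:ℝ) < (Real.exp ‖a‖ * Real.exp ‖b‖) ^ m := by positivity
    calc ‖C ^ i * (C - D) * D ^ m‖
        ≤ Real.exp ‖i • (a + b)‖ * ‖(C - D) * D ^ m‖ := step1
      _ ≤ Real.exp (i * t) * ((t ^ 2 * Real.exp t) * (Real.exp ‖a‖ * Real.exp ‖b‖) ^ m) :=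
          mul_le_mul (Real.exp_le_exp.2 hnsmul)
            (step2.trans (mul_le_mul_of_nonneg_right step3 hEpow.le))
            (norm_nonneg _) (Real.exp_pos _).le
      _ = t ^ 2 * Real.exp (n * t) := by
          have e1 : Real.exp ‖a‖ * Real.exp ‖b‖ = Real.exp t := by
            rw [← Real.exp_add]
          have e2 : ((n : ℝ)) * t = i * t + (t + m * t) := by
            have h5 : i + 1 + m = n := by omega
            rw [← h5]
            push_cast
            ring
          rw [e1, ← Real.exp_nat_mul, e2, Real.exp_add ((i:ℝ)*t) (t + (m:ℝ)*t), Real.exp_add t ((m:ℝ)*t)]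
          ring
  refine (Finset.sum_le_sum hterm).trans ?_
  rw [Finset.sum_const, Finset.card_range, nsmul_eq_mul]

end LieTrotterAux

/-- Lie–Trotter product formula with quantitative step: with
`C = exp((L₁+L₂)/n)` and `D = exp(L₁/n) * exp(L₂/n)`, one has
`‖Cⁿ - Dⁿ‖ ≤ 2 exp(2‖L₁‖ + 2‖L₂‖)/n`, and consequently
`(exp(L₁/n) * exp(L₂/n))ⁿ → exp(L₁ + L₂)` as `n → ∞`. -/
theorem lie_trotter_product_formula {A : Type*} [NormedRing A] [NormedAlgebra ℂ A]
    [CompleteSpace A] (L₁ L₂ : A) :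
    (∀ n : ℕ, 0 < n →
      ‖(exp ((n : ℂ)⁻¹ • (L₁ + L₂))) ^ n -
          (exp ((n : ℂ)⁻¹ • L₁) * exp ((n : ℂ)⁻¹ • L₂)) ^ n‖ ≤
        2 * Real.exp (2 * ‖L₁‖ + 2 * ‖L₂‖) / (n : ℝ)) ∧
    Tendsto (fun n : ℕ => (exp ((n : ℂ)⁻¹ • L₁) * exp ((n : ℂ)⁻¹ • L₂)) ^ n)
      atTop (nhds (exp (L₁ + L₂))) := by
  have key : ∀ n : ℕ, 0 < n →
      ‖(exp ((n : ℂ)⁻¹ • (L₁ + L₂))) ^ n -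
          (exp ((n : ℂ)⁻¹ • L₁) * exp ((n : ℂ)⁻¹ • L₂)) ^ n‖ ≤
        2 * Real.exp (2 * ‖L₁‖ + 2 * ‖L₂‖) / (n : ℝ) := by
    intro n hn
    have hn' : (0:ℝ) < (n : ℝ) := by exact_mod_cast hn
    set a := (n : ℂ)⁻¹ • L₁ with ha'
    set b := (n : ℂ)⁻¹ • L₂ with hb'
    have hab : (n : ℂ)⁻¹ • (L₁ + L₂) = a + b := smul_add _ _ _
    have hninv : ‖((n : ℂ))⁻¹‖ = ((n : ℝ))⁻¹ := by
      rw [norm_inv]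
      norm_cast
    have ha : ‖a‖ = ‖L₁‖ / n := by
      rw [ha', norm_smul, hninv, inv_mul_eq_div]
    have hb : ‖b‖ = ‖L₂‖ / n := by
      rw [hb', norm_smul, hninv, inv_mul_eq_div]
    set r := ‖L₁‖ + ‖L₂‖ with hr
    have ht : ‖a‖ + ‖b‖ = r / n := by rw [ha, hb, hr]; ring
    have hr0 : 0 ≤ r := by positivity
    have H := lt_main a b n
    rw [hab]
    refine H.trans ?_
    rw [ht]
    have hnt : (n : ℝ) * (r / n) = r := by field_simp
    rw [hnt]
    have hr2 : r ^ 2 ≤ 2 * Real.exp r := by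
      nlinarith [Real.quadratic_le_exp_of_nonneg hr0]
    have hexp : 0 < Real.exp r := Real.exp_pos _
    calc (n : ℝ) * ((r / n) ^ 2 * Real.exp r) = r ^ 2 * Real.exp r / n := by
          field_simp
      _ ≤ 2 * Real.exp r * Real.exp r / n := by gcongr
      _ = 2 * Real.exp (2 * ‖L₁‖ + 2 * ‖L₂‖) / n := by
          rw [mul_assoc, ← Real.exp_add, show r + r = 2 * ‖L₁‖ + 2 * ‖L₂‖ from by rw [hr]; ring]
  refine ⟨key, ?_⟩
  have hC : ∀ n : ℕ, 0 < n → (exp ((n : ℂ)⁻¹ • (L₁ + L₂))) ^ n = exp (L₁ + L₂) := by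
    intro n hn
    letI : NormedAlgebra ℚ A := NormedAlgebra.restrictScalars ℚ ℂ A
    rw [← exp_nsmul, ← Nat.cast_smul_eq_nsmul ℂ, smul_smul,
      mul_inv_cancel₀ (by exact_mod_cast hn.ne' : ((n : ℂ)) ≠ 0), one_smul]
  rw [← tendsto_sub_nhds_zero_iff]
  have hev : ∀ᶠ n : ℕ in atTop,
      ‖(exp ((n : ℂ)⁻¹ • L₁) * exp ((n : ℂ)⁻¹ • L₂)) ^ n - exp (L₁ + L₂)‖ ≤
        2 * Real.exp (2 * ‖L₁‖ + 2 * ‖L₂‖) / (n : ℝ) := by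
    filter_upwards [eventually_gt_atTop 0] with n hn
    rw [← hC n hn, norm_sub_rev]
    exact key n hn
  exact squeeze_zero_norm' hev (tendsto_const_div_atTop_nhds_zero_nat _)
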